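/- Let λ ∈ U be any point with f_i(λ) ≠ 0 for all i, and let ε > 0. Then there exist an admissible index tuple I = (i_1 < ⋯ < i_{m−1}), rational numbers ℓ_1, …, ℓ_{m−1} ∈ ℚ ∖ ℤ with ℓ_s − ℓ_t ∉ ℤ for s ≠ t, and elements u_1, …, u_{m−1} ∈ K ∖ {0} with ν(u_t) = ℓ_t for each t, such that ‖F(T_I(u_1, …, u_{m−1})) − F(λ)‖ < ε (Euclidean norm on ℝ^m). -/

import Mathlib

set_option linter.unusedSectionVars false
set_option linter.unusedTactic false
set_option maxHeartbeats 1000000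

/-- The additive valuation associated to the norm of a nonarchimedean normed field:
`ν x = -log ‖x‖`. -/
noncomputable def nuVal (K : Type*) [NormedField K] (x : K) : ℝ := -Real.log ‖x‖

/-- The affine form `f_i(x) = β_{i,1} x_1 + ⋯ + β_{i,m-1} x_{m-1} + β_{i,m}`
(here with `m - 1` replaced by `m`, i.e. coefficients indexed by `Fin (m+1)`). -/
noncomputable def affForm (K : Type*) [NormedField K] {N m : ℕ}
    (B : Matrix (Fin N) (Fin (m + 1)) ℤ) (i : Fin N) (x : Fin m → K) : K :=
  (∑ t : Fin m, (B i t.castSucc : K) * x t) + (B i (Fin.last m) : K)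

/-- `F(λ)_ℓ = Σ_i β_{i,ℓ} ν(f_i(λ))`. -/
noncomputable def Fmap (K : Type*) [NormedField K] {N m : ℕ}
    (B : Matrix (Fin N) (Fin (m + 1)) ℤ) (lam : Fin m → K) (ℓ : Fin (m + 1)) : ℝ :=
  ∑ i, (B i ℓ : ℝ) * nuVal K (affForm K B i lam)

/-- `I = (i_1 < ⋯ < i_{m-1})` is admissible if the corresponding minor of `B`
is invertible over `ℚ`. -/
def Admissible {N m : ℕ} (B : Matrix (Fin N) (Fin (m + 1)) ℤ) (I : Fin m → Fin N) : Prop :=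
  StrictMono I ∧ (Matrix.of fun j t : Fin m => (B (I j) t.castSucc : ℚ)).det ≠ 0

open Matrix

section NuVal
variable {K : Type*} [NormedField K]

lemma nuVal_mul' {x y : K} (hx : x ≠ 0) (hy : y ≠ 0) :
    nuVal K (x * y) = nuVal K x + nuVal K y := by
  simp only [nuVal, norm_mul]
  rw [Real.log_mul (norm_ne_zero_iff.2 hx) (norm_ne_zero_iff.2 hy)]
  ring

lemma nuVal_neg' (x : K) : nuVal K (-x) = nuVal K x := by simp [nuVal]

lemma nuVal_lt_iff {x y : K} (hx : x ≠ 0) (hy : y ≠ 0) :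
    nuVal K x < nuVal K y ↔ ‖y‖ < ‖x‖ := by
  simp only [nuVal, neg_lt_neg_iff]
  exact Real.log_lt_log_iff (norm_pos_iff.2 hy) (norm_pos_iff.2 hx)

end NuVal

section Helpers
variable {K : Type*} [NormedField K] [IsUltrametricDist K]

lemma norm_add_eq_left {x y : K} (h : ‖y‖ < ‖x‖) : ‖x + y‖ = ‖x‖ := by
  rw [IsUltrametricDist.norm_add_eq_max_of_norm_ne_norm h.ne', max_eq_left h.le]

lemma norm_sum_lt_of_lt {α : Type*} (s : Finset α) (g : α → K) {C : ℝ} (hC : 0 < C)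
    (h : ∀ b ∈ s, ‖g b‖ < C) : ‖∑ b ∈ s, g b‖ < C := by
  rcases s.eq_empty_or_nonempty with rfl | hs
  · simpa using hC
  · refine lt_of_le_of_lt (hs.norm_sum_le_sup'_norm g) ?_
    exact (Finset.sup'_lt_iff hs).2 h

lemma exists_rat_btwn_not_mem (E : Finset ℝ) {a b : ℝ} (h : a < b) :
    ∃ q : ℚ, a < (q : ℝ) ∧ (q : ℝ) < b ∧ (q : ℝ) ∉ E := by
  classical
  set F : Finset ℝ := insert b (E.filter (a < ·)) with hF
  have hFne : F.Nonempty := ⟨b, Finset.mem_insert_self _ _⟩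
  have hac : a < F.min' hFne := by
    rw [Finset.lt_min'_iff]
    intro y hy
    rcases Finset.mem_insert.1 hy with rfl | hy
    · exact h
    · exact (Finset.mem_filter.1 hy).2
  obtain ⟨q, hq1, hq2⟩ := exists_rat_btwn hac
  refine ⟨q, hq1, lt_of_lt_of_le hq2 (F.min'_le b (Finset.mem_insert_self _ _)), fun hqE => ?_⟩
  exact absurd (F.min'_le _ (Finset.mem_insert_of_mem (Finset.mem_filter.2 ⟨hqE, hq1⟩))) (not_le.2 hq2)

lemma seq_choice {m : ℕ} (P : Fin m → ℚ → (Fin m → ℚ) → Prop)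
    (hP : ∀ t q ℓ ℓ', (∀ s, s < t → ℓ s = ℓ' s) → P t q ℓ → P t q ℓ')
    (hex : ∀ t ℓ, ∃ q, P t q ℓ) : ∃ ℓ : Fin m → ℚ, ∀ t, P t (ℓ t) ℓ := by
  suffices H : ∀ k : ℕ, k ≤ m → ∃ ℓ : Fin m → ℚ, ∀ t : Fin m, (t : ℕ) < k → P t (ℓ t) ℓ by
    obtain ⟨ℓ, hℓ⟩ := H m le_rfl
    exact ⟨ℓ, fun t => hℓ t t.isLt⟩
  intro k
  induction k with
  | zero => exact fun _ => ⟨fun _ => 0, fun t ht => absurd ht (Nat.not_lt_zero _)⟩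
  | succ k ih =>
    intro hk
    obtain ⟨ℓ, hℓ⟩ := ih (Nat.le_of_succ_le hk)
    set tk : Fin m := ⟨k, hk⟩ with htk
    obtain ⟨q, hq⟩ := hex tk ℓ
    refine ⟨Function.update ℓ tk q, fun t ht => ?_⟩
    rcases Nat.lt_succ_iff_lt_or_eq.1 ht with ht' | ht'
    · have hne : t ≠ tk := by
        intro he; rw [he] at ht'; exact absurd ht' (lt_irrefl _)
      rw [Function.update_of_ne hne]
      refine hP t (ℓ t) ℓ _ (fun s hs => ?_) (hℓ t ht')
      have hsv : s ≠ tk := by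
        intro he
        have h1 : (s : ℕ) = k := by rw [he]
        have h2 : (s : ℕ) < (t : ℕ) := hs
        omega
      rw [Function.update_of_ne hsv]
    · have hte : t = tk := by apply Fin.ext; exact ht'
      rw [hte, Function.update_self]
      refine hP tk q ℓ _ (fun s hs => ?_) hq
      have hsv : s ≠ tk := by intro he; rw [he] at hs; exact absurd hs (lt_irrefl _)
      rw [Function.update_of_ne hsv]

end Helpers

lemma exists_admissible {N m : ℕ} (B : Matrix (Fin N) (Fin (m+1)) ℤ)
    (hrank : (B.map (Int.cast : ℤ → ℚ)).rank = m + 1) :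
    ∃ I : Fin m → Fin N, StrictMono I ∧
      (Matrix.of fun j t : Fin m => (B (I j) t.castSucc : ℚ)).det ≠ 0 := by
  classical
  set A : Matrix (Fin N) (Fin (m+1)) ℚ := B.map (Int.cast : ℤ → ℚ) with hA
  set A' : Matrix (Fin N) (Fin m) ℚ := Matrix.of (fun i t => A i t.castSucc) with hA'
  have hAcols : LinearIndependent ℚ (fun t => Aᵀ t) := by
    rw [linearIndependent_iff_card_eq_finrank_span]
    rw [Matrix.rank_eq_finrank_span_cols] at hrank
    simp only [Fintype.card_fin, Set.finrank]
    exact hrank.symm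
  have hA'cols : LinearIndependent ℚ (fun t => A'ᵀ t) := by
    have : (fun t => A'ᵀ t) = (fun t => Aᵀ t) ∘ Fin.castSucc := by
      funext t; rfl
    rw [this]
    exact hAcols.comp _ (Fin.castSucc_injective m)
  have hrankA' : A'.rank = m := by
    rw [Matrix.rank_eq_finrank_span_cols]
    have := finrank_span_eq_card hA'cols
    exact this.trans (Fintype.card_fin m)
  have hspan : Submodule.span ℚ (Set.range (fun i => A' i)) = ⊤ := by
    apply Submodule.eq_top_of_finrank_eq
    have h1 : A'ᵀ.rank = m := by rw [Matrix.rank_transpose]; exact hrankA'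
    rw [Matrix.rank_eq_finrank_span_cols] at h1
    have h2 : A'ᵀᵀ = A' := Matrix.transpose_transpose A'
    rw [Matrix.col, h2] at h1
    rw [h1]
    simp [Module.finrank_fintype_fun_eq_card]
  obtain ⟨b, hb_sub, hb_span, hb_li⟩ := exists_linearIndependent ℚ (Set.range (fun i => A' i))
  rw [hspan] at hb_span
  have hb_fin : b.Finite := (Set.finite_range _).subset hb_sub
  have : Fintype b := hb_fin.fintype
  have hbas : Fintype.card b = m := by
    let bas : Module.Basis b ℚ (Fin m → ℚ) := Module.Basis.mk hb_li (by rw [Subtype.range_coe, hb_span])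
    have := Module.finrank_eq_card_basis bas
    simp only [Module.finrank_fintype_fun_eq_card, Fintype.card_fin] at this
    omega
  have hchoice : ∀ v : b, ∃ i : Fin N, A' i = (v : Fin m → ℚ) := fun v => hb_sub v.2
  choose φ hφ using hchoice
  have hφinj : Function.Injective φ := by
    intro v v' he
    apply Subtype.ext
    rw [← hφ v, ← hφ v', he]
  set s : Finset (Fin N) := Finset.univ.image φ with hs
  have hscard : s.card = m := by
    rw [hs, Finset.card_image_of_injective _ hφinj, Finset.card_univ, hbas]
  set I : Fin m ↪o Fin N := s.orderEmbOfFin hscard with hI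
  refine ⟨I, I.strictMono, ?_⟩
  have hmem : ∀ j, I j ∈ s := fun j => s.orderEmbOfFin_mem hscard j
  have hrow : ∀ j : Fin m, ∃ v : b, φ v = I j := by
    intro j
    obtain ⟨v, _, hv⟩ := Finset.mem_image.1 (hmem j)
    exact ⟨v, hv⟩
  choose ψ hψ using hrow
  have hψA : ∀ j, A' (I j) = (ψ j : Fin m → ℚ) := by
    intro j; rw [← hψ j, hφ]
  have hψinj : Function.Injective ψ := by
    intro j j' he
    have : I j = I j' := by rw [← hψ j, ← hψ j', he]
    exact I.injective this
  have hli : LinearIndependent ℚ (fun j : Fin m => A' (I j)) := by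
    have : (fun j : Fin m => A' (I j)) = (fun v : b => (v : Fin m → ℚ)) ∘ ψ := by
      funext j; rw [hψA j]; rfl
    rw [this]
    exact hb_li.comp ψ hψinj
  have hM : (Matrix.of fun j t : Fin m => (B (I j) t.castSucc : ℚ)) = Matrix.of (fun j => A' (I j)) := by
    ext j t
    simp [hA', hA, Matrix.map_apply]
  rw [hM]
  have hunit : IsUnit (Matrix.of (fun j => A' (I j))) :=
    Matrix.linearIndependent_rows_iff_isUnit.1 hli
  have := (Matrix.isUnit_iff_isUnit_det _).1 hunit
  exact IsUnit.ne_zero this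

/-- the square minor of the first `m` columns along rows `I` -/
def minorM {N m : ℕ} (B : Matrix (Fin N) (Fin (m+1)) ℤ) (I : Fin m → Fin N) :
    Matrix (Fin m) (Fin m) ℚ := Matrix.of fun j t => (B (I j) t.castSucc : ℚ)

/-- coefficients expressing row `i` of `B` (linear part) in terms of the rows `I` -/
noncomputable def coefC {N m : ℕ} (B : Matrix (Fin N) (Fin (m+1)) ℤ) (I : Fin m → Fin N)
    (i : Fin N) : Fin m → ℚ :=
  ((minorM B I)ᵀ)⁻¹.mulVec (fun t => (B i t.castSucc : ℚ))

section MinorLemmas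
variable {N m : ℕ} (B : Matrix (Fin N) (Fin (m+1)) ℤ) (I : Fin m → Fin N)

lemma coefC_row (hdet : (minorM B I).det ≠ 0) (i : Fin N) (t : Fin m) :
    (B i t.castSucc : ℚ) = ∑ j, coefC B I i j * (B (I j) t.castSucc : ℚ) := by
  have hu : IsUnit (minorM B I)ᵀ.det := by
    rw [Matrix.det_transpose]; exact isUnit_iff_ne_zero.2 hdet
  have h : (minorM B I)ᵀ.mulVec (coefC B I i) = fun t => (B i t.castSucc : ℚ) := by
    rw [coefC, Matrix.mulVec_mulVec, Matrix.mul_nonsing_inv _ hu, Matrix.one_mulVec]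
  have := congrFun h t
  rw [Matrix.mulVec, dotProduct] at this
  rw [← this]
  apply Finset.sum_congr rfl
  intro j _
  rw [Matrix.transpose_apply, mul_comm]
  rfl

lemma coefC_self (hdet : (minorM B I).det ≠ 0) (s : Fin m) : coefC B I (I s) = Pi.single s 1 := by
  have hu : IsUnit (minorM B I)ᵀ.det := by
    rw [Matrix.det_transpose]; exact isUnit_iff_ne_zero.2 hdet
  have hinj : Function.Injective ((minorM B I)ᵀ).mulVec :=
    Matrix.mulVec_injective_iff_isUnit.2 ((Matrix.isUnit_iff_isUnit_det _).2 hu)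
  apply hinj
  have h1 : (minorM B I)ᵀ.mulVec (coefC B I (I s)) = fun t => (B (I s) t.castSucc : ℚ) := by
    rw [coefC, Matrix.mulVec_mulVec, Matrix.mul_nonsing_inv _ hu, Matrix.one_mulVec]
  rw [h1, Matrix.mulVec_single_one]
  funext t
  simp [minorM]

lemma cramer_det (hdet : (minorM B I).det ≠ 0) (i : Fin N) (t : Fin m) :
    (minorM B (Function.update I t i)).det = coefC B I i t * (minorM B I).det := by
  have h1 : minorM B (Function.update I t i) =
      (minorM B I).updateRow t (fun t' => (B i t'.castSucc : ℚ)) := by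
    ext j t'
    by_cases hj : j = t
    · subst hj; simp [minorM, Matrix.updateRow_apply, Function.update_self]
    · simp [minorM, Matrix.updateRow_apply, hj, Function.update_of_ne hj]
  have h2 : (fun t' => (B i t'.castSucc : ℚ)) = ∑ k, coefC B I i k • (minorM B I k) := by
    funext t'
    rw [coefC_row B I hdet i t']
    simp [minorM, Finset.sum_apply]
  rw [h1, h2, Matrix.det_updateRow_sum]
  simp [smul_eq_mul]

end MinorLemmas

lemma perm_of_image_eq {m : ℕ} {β : Type*} [DecidableEq β] {f g : Fin m → β}
    (hf : Function.Injective f) (hg : Function.Injective g)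
    (h : Finset.univ.image f = Finset.univ.image g) :
    ∃ σ : Equiv.Perm (Fin m), ∀ x, f (σ x) = g x := by
  have hrange : Set.range f = Set.range g := by
    have := congrArg (fun s : Finset β => (s : Set β)) h
    simpa [Finset.coe_image, Set.image_univ] using this
  refine ⟨(Equiv.ofInjective g hg).trans ((Equiv.setCongr hrange.symm).trans
    (Equiv.ofInjective f hf).symm), fun x => ?_⟩
  simp only [Equiv.trans_apply]
  rw [Equiv.apply_ofInjective_symm hf]
  rfl

lemma no_cancel {K : Type*} [NormedField K] [CharZero K] {N m : ℕ}
    (B : Matrix (Fin N) (Fin (m+1)) ℤ) (nwv : Fin N → ℝ) (I : Fin m → Fin N)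
    (hSM : StrictMono I) (hdet : (minorM B I).det ≠ 0)
    (hmax : ∀ I' : Fin m → Fin N, StrictMono I' → (minorM B I').det ≠ 0 →
      (∑ j, nwv (I' j)) - nuVal K (((minorM B I').det : K)) ≤
      (∑ j, nwv (I j)) - nuVal K (((minorM B I).det : K)))
    (i : Fin N) (t : Fin m) (hc : coefC B I i t ≠ 0) :
    nwv i ≤ nuVal K (((coefC B I i t : ℚ) : K)) + nwv (I t) := by
  classical
  by_cases hi : ∃ s, I s = i
  · obtain ⟨s, rfl⟩ := hi
    rw [coefC_self B I hdet s] at hc ⊢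
    have hts : t = s := by
      by_contra hts
      exact hc (Pi.single_eq_of_ne hts 1)
    subst hts
    rw [Pi.single_eq_same]
    norm_num [nuVal]
  · push_neg at hi
    set J : Fin m → Fin N := Function.update I t i with hJ
    have hJt : J t = i := Function.update_self t i I
    have hJne : ∀ j, j ≠ t → J j = I j := fun j hj => Function.update_of_ne hj i I
    have hJinj : Function.Injective J := by
      intro a b hab
      by_cases ha : a = t <;> by_cases hb : b = t
      · rw [ha, hb]
      · rw [ha, hJt, hJne b hb] at hab; exact absurd hab.symm (hi b)
      · rw [hb, hJt, hJne a ha] at hab; exact absurd hab (hi a)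
      · rw [hJne a ha, hJne b hb] at hab; exact hSM.injective hab
    set s' : Finset (Fin N) := Finset.univ.image J with hs'
    have hs'card : s'.card = m := by
      rw [hs', Finset.card_image_of_injective _ hJinj, Finset.card_univ, Fintype.card_fin]
    set I' : Fin m → Fin N := (s'.orderEmbOfFin hs'card : Fin m → Fin N) with hI'def
    have hI'inj : Function.Injective I' := (s'.orderEmbOfFin hs'card).injective
    have hI'img : Finset.univ.image J = Finset.univ.image I' := by
      apply Finset.coe_injective
      rw [Finset.coe_image, Finset.coe_image, Finset.coe_univ, Set.image_univ, Set.image_univ,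
        hI'def, Finset.range_orderEmbOfFin, hs']
      rw [Finset.coe_image, Finset.coe_univ, Set.image_univ]
    obtain ⟨σ, hσ⟩ := perm_of_image_eq hJinj hI'inj hI'img
    have hMsub : minorM B I' = (minorM B J).submatrix σ id := by
      ext j t'
      simp only [minorM, Matrix.submatrix_apply, Matrix.of_apply, id]
      rw [hσ j]
    have hdet' : (minorM B I').det =
        ((Equiv.Perm.sign σ : ℤ) : ℚ) * (coefC B I i t * (minorM B I).det) := by
      rw [hMsub, Matrix.det_permute, hJ, cramer_det B I hdet i t]
    have hcne : (minorM B I').det ≠ 0 := by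
      rw [hdet']
      exact mul_ne_zero (Int.cast_ne_zero.2 (Equiv.Perm.sign σ).ne_zero) (mul_ne_zero hc hdet)
    have hSM' : StrictMono I' := (s'.orderEmbOfFin hs'card).strictMono
    have hle := hmax I' hSM' hcne
    have hsum1 : ∑ j, nwv (I' j) = ∑ j, nwv (J j) := by
      rw [← Equiv.sum_comp σ (fun j => nwv (J j))]
      exact Finset.sum_congr rfl fun j _ => by rw [hσ j]
    have herase : ∀ g : Fin m → ℝ, ∑ j, g j = g t + ∑ j ∈ Finset.univ.erase t, g j :=
      fun g => (Finset.add_sum_erase _ g (Finset.mem_univ t)).symm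
    have hsum2 : ∑ j, nwv (J j) = nwv i + ∑ j ∈ Finset.univ.erase t, nwv (I j) := by
      rw [herase (fun j => nwv (J j)), hJt]
      congr 1
      exact Finset.sum_congr rfl fun j hj => by rw [hJne j (Finset.ne_of_mem_erase hj)]
    have hsum3 : ∑ j, nwv (I j) = nwv (I t) + ∑ j ∈ Finset.univ.erase t, nwv (I j) :=
      herase _
    have hq1 : ((coefC B I i t : ℚ) : K) ≠ 0 := Rat.cast_ne_zero.2 hc
    have hq2 : (((minorM B I).det : ℚ) : K) ≠ 0 := Rat.cast_ne_zero.2 hdet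
    have hν : nuVal K (((minorM B I').det : K)) =
        nuVal K ((coefC B I i t : K)) + nuVal K (((minorM B I).det : K)) := by
      rw [hdet']
      rcases Int.units_eq_one_or (Equiv.Perm.sign σ) with hsg | hsg <;> rw [hsg] <;> push_cast
      · rw [one_mul, ← Rat.cast_det, nuVal_mul' hq1 hq2]
      · rw [neg_one_mul, nuVal_neg', ← Rat.cast_det, nuVal_mul' hq1 hq2]
    rw [hsum1, hsum2, hν, hsum3] at hle
    linarith

lemma exists_T {K : Type*} [NormedField K] [CharZero K] {N m : ℕ}
    (B : Matrix (Fin N) (Fin (m+1)) ℤ) (I : Fin m → Fin N) (hdet : (minorM B I).det ≠ 0) :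
    ∃ T : (Fin m → K) → (Fin m → K), Function.Bijective T ∧
      (∀ x j, affForm K B (I j) (T x) = x j) ∧
      (∀ (i : Fin N) (x : Fin m → K), affForm K B i (T x) =
        (∑ j, ((coefC B I i j : ℚ) : K) * x j) +
        ((((B i (Fin.last m) : ℚ) - ∑ j, coefC B I i j * (B (I j) (Fin.last m) : ℚ)) : ℚ) : K)) := by
  classical
  set Amat : Matrix (Fin m) (Fin m) K := Matrix.of (fun j t => (B (I j) t.castSucc : K)) with hAm
  have hAmap : Amat = (minorM B I).map (fun q : ℚ => (q : K)) := by
    ext j t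
    simp only [hAm, minorM, Matrix.map_apply, Matrix.of_apply]
    push_cast
    rfl
  have hAdet : Amat.det = (((minorM B I).det : ℚ) : K) := by
    rw [hAmap]
    exact (RingHom.map_det (Rat.castHom K) (minorM B I)).symm
  have hAunit : IsUnit Amat.det := by
    rw [hAdet]; exact isUnit_iff_ne_zero.2 (Rat.cast_ne_zero.2 hdet)
  set bv : Fin m → K := fun j => (B (I j) (Fin.last m) : K) with hbv
  set T : (Fin m → K) → (Fin m → K) :=
    fun x => Amat⁻¹.mulVec (fun j => x j - bv j) with hT
  have hmul : ∀ z : Fin m → K, Amat.mulVec (Amat⁻¹.mulVec z) = z := by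
    intro z; rw [Matrix.mulVec_mulVec, Matrix.mul_nonsing_inv _ hAunit, Matrix.one_mulVec]
  have hmul2 : ∀ z : Fin m → K, Amat⁻¹.mulVec (Amat.mulVec z) = z := by
    intro z; rw [Matrix.mulVec_mulVec, Matrix.nonsing_inv_mul _ hAunit, Matrix.one_mulVec]
  have hsum : ∀ (y : Fin m → K) (j : Fin m),
      ∑ t, (B (I j) t.castSucc : K) * y t = Amat.mulVec y j := by
    intro y j
    rw [Matrix.mulVec, dotProduct]
    rfl
  have hTeval : ∀ (x : Fin m → K) (j : Fin m), affForm K B (I j) (T x) = x j := by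
    intro x j
    show (∑ t, (B (I j) t.castSucc : K) * (T x) t) + bv j = x j
    rw [hsum (T x) j, hT, hmul (fun j => x j - bv j)]
    exact sub_add_cancel _ _
  refine ⟨T, ?_, hTeval, ?_⟩
  · refine Function.bijective_iff_has_inverse.2
      ⟨fun y j => Amat.mulVec y j + bv j, fun x => ?_, fun y => ?_⟩
    · funext j
      show (Amat *ᵥ (Amat⁻¹ *ᵥ fun j => x j - bv j)) j + bv j = x j
      rw [hmul (fun j => x j - bv j)]
      exact sub_add_cancel _ _
    · show (Amat⁻¹ *ᵥ fun j => ((Amat *ᵥ y) j + bv j) - bv j) = y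
      have h9 : (fun j => ((Amat *ᵥ y) j + bv j) - bv j) = Amat *ᵥ y := by funext j; ring
      rw [h9, hmul2]
  · intro i x
    have hrowK : ∀ t : Fin m, (B i t.castSucc : K) =
        ∑ j, ((coefC B I i j : ℚ) : K) * (B (I j) t.castSucc : K) := by
      intro t
      have h := congrArg (fun q : ℚ => (q : K)) (coefC_row B I hdet i t)
      push_cast at h
      exact h
    have hinner : ∀ j, ∑ t, (B (I j) t.castSucc : K) * (T x) t = x j - bv j := by
      intro j
      have h2 : (∑ t, (B (I j) t.castSucc : K) * (T x) t) + bv j = x j := hTeval x j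
      linear_combination h2
    show (∑ t, (B i t.castSucc : K) * (T x) t) + (B i (Fin.last m) : K) = _
    calc (∑ t, (B i t.castSucc : K) * (T x) t) + (B i (Fin.last m) : K)
        = (∑ t, (∑ j, ((coefC B I i j : ℚ) : K) * (B (I j) t.castSucc : K)) * (T x) t)
            + (B i (Fin.last m) : K) := by
          congr 1
          exact Finset.sum_congr rfl fun t _ => by rw [← hrowK t]
      _ = (∑ j, ((coefC B I i j : ℚ) : K) * ∑ t, (B (I j) t.castSucc : K) * (T x) t)
            + (B i (Fin.last m) : K) := by
          congr 1
          simp only [Finset.sum_mul]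
          rw [Finset.sum_comm]
          simp only [Finset.mul_sum, mul_assoc]
      _ = (∑ j, ((coefC B I i j : ℚ) : K) * (x j - bv j)) + (B i (Fin.last m) : K) := by
          congr 1
          exact Finset.sum_congr rfl fun j _ => by rw [hinner j]
      _ = (∑ j, ((coefC B I i j : ℚ) : K) * x j) +
          ((((B i (Fin.last m) : ℚ) - ∑ j, coefC B I i j * (B (I j) (Fin.last m) : ℚ)) : ℚ) : K) := by
          push_cast
          simp only [mul_sub, Finset.sum_sub_distrib, hbv]
          ring

theorem stmt0
    (K : Type*) [NormedField K] [IsAlgClosed K] [CharZero K] [CompleteSpace K]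
    [IsUltrametricDist K]
    (hQsub : ∀ q : ℚ, ∃ x : K, x ≠ 0 ∧ nuVal K x = (q : ℝ))
    (hQint : ∀ q : ℚ, q ≠ 0 → ∃ z : ℤ, nuVal K ((q : K)) = (z : ℝ))
    (n m : ℕ)
    (B : Matrix (Fin (n + m + 2)) (Fin (m + 1)) ℤ)
    (hrank : (B.map (Int.cast : ℤ → ℚ)).rank = m + 1)
    (hrows : ∀ i, ∃ ℓ, B i ℓ ≠ 0)
    (hcols : ∀ ℓ, (∑ i, B i ℓ) = 0)
    (lam : Fin m → K) (hlam : ∀ i, affForm K B i lam ≠ 0)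
    (ε : ℝ) (hε : 0 < ε) :
    ∃ I : Fin m → Fin (n + m + 2), Admissible B I ∧
    ∃ T : (Fin m → K) → (Fin m → K), Function.Bijective T ∧
      (∀ (x : Fin m → K) (j : Fin m), affForm K B (I j) (T x) = x j) ∧
    ∃ ℓ : Fin m → ℚ,
      (∀ t, ∀ z : ℤ, ℓ t ≠ (z : ℚ)) ∧
      (∀ s t, s ≠ t → ∀ z : ℤ, ℓ s - ℓ t ≠ (z : ℚ)) ∧
    ∃ u : Fin m → K, (∀ t, u t ≠ 0) ∧ (∀ t, nuVal K (u t) = (ℓ t : ℝ)) ∧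
      Real.sqrt (∑ j : Fin (m + 1), (Fmap K B (T u) j - Fmap K B lam j) ^ 2) < ε := by
  classical
  -- the weights
  set nw : Fin (n + m + 2) → ℝ := fun i => nuVal K (affForm K B i lam) with hnw
  -- maximizer of Φ over admissible tuples
  set Phi : (Fin m → Fin (n + m + 2)) → ℝ :=
    fun I => (∑ j, nw (I j)) - nuVal K (((minorM B I).det : K)) with hPhi
  set Sadm : Finset (Fin m → Fin (n + m + 2)) :=
    Finset.univ.filter (fun I => StrictMono I ∧ (minorM B I).det ≠ 0) with hSadm
  have hSne : Sadm.Nonempty := by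
    obtain ⟨I₀, h1, h2⟩ := exists_admissible B hrank
    exact ⟨I₀, Finset.mem_filter.2 ⟨Finset.mem_univ _, h1, h2⟩⟩
  obtain ⟨I, hIS, hImax⟩ := Sadm.exists_max_image Phi hSne
  obtain ⟨hSM, hdet⟩ : StrictMono I ∧ (minorM B I).det ≠ 0 := (Finset.mem_filter.1 hIS).2
  -- no cancellation
  have hNC : ∀ i t, coefC B I i t ≠ 0 →
      nw i ≤ nuVal K ((coefC B I i t : K)) + nw (I t) := by
    intro i t hc
    refine no_cancel B nw I hSM hdet ?_ i t hc
    intro I' h1 h2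
    exact hImax I' (Finset.mem_filter.2 ⟨Finset.mem_univ _, h1, h2⟩)
  -- the affine bijection
  obtain ⟨T, hTbij, hTeval, hTaff⟩ := exists_T (K := K) B I hdet
  -- abbreviations
  set νc : Fin (n + m + 2) → Fin m → ℝ := fun i t => nuVal K ((coefC B I i t : K)) with hνc
  set av : Fin m → ℝ := fun t => nw (I t) with hav
  set C : ℝ := 1 + ∑ i, ∑ j', |(B i j' : ℝ)| with hC
  have hC1 : 1 ≤ C := by
    rw [hC]
    have : (0:ℝ) ≤ ∑ i, ∑ j', |(B i j' : ℝ)| :=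
      Finset.sum_nonneg fun i _ => Finset.sum_nonneg fun j' _ => abs_nonneg _
    linarith
  have hC0 : 0 < C := lt_of_lt_of_le one_pos hC1
  set D : ℝ := ((m:ℝ)+1) * C with hD
  have hD0 : 0 < D := by positivity
  set δ : ℝ := min (1/2) (ε / (2*D)) with hδ
  have hδ0 : 0 < δ := lt_min (by norm_num) (by positivity)
  have hδhalf : δ ≤ 1/2 := min_le_left _ _
  have hδD : D * δ ≤ ε/2 := by
    have h1 : δ ≤ ε/(2*D) := min_le_right _ _
    have h2 : D * δ ≤ D * (ε/(2*D)) := mul_le_mul_of_nonneg_left h1 hD0.le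
    calc D * δ ≤ D * (ε/(2*D)) := h2
      _ = ε/2 := by field_simp
  -- choice of the rational numbers ℓ
  set P : Fin m → ℚ → (Fin m → ℚ) → Prop := fun t q ℓp =>
    (av t - δ < (q:ℝ)) ∧ ((q:ℝ) < av t) ∧ (∀ z : ℤ, q ≠ (z:ℚ)) ∧
    (∀ s : Fin m, s < t → ∀ z : ℤ, q - ℓp s ≠ (z:ℚ)) ∧
    (∀ i, νc i t + (q:ℝ) ≠ nw i) ∧
    (∀ i, ∀ s : Fin m, s < t → νc i t + (q:ℝ) ≠ νc i s + ((ℓp s : ℚ):ℝ)) with hP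
  have hPmono : ∀ t q ℓ ℓ', (∀ s, s < t → ℓ s = ℓ' s) → P t q ℓ → P t q ℓ' := by
    intro t q ℓ ℓ' hs hp
    refine ⟨hp.1, hp.2.1, hp.2.2.1, ?_, hp.2.2.2.2.1, ?_⟩
    · intro s hst z; rw [← hs s hst]; exact hp.2.2.2.1 s hst z
    · intro i s hst; rw [← hs s hst]; exact hp.2.2.2.2.2 i s hst
  have hPex : ∀ t ℓp, ∃ q, P t q ℓp := by
    intro t ℓp
    have hint : av t - δ < av t := by linarith
    set E : Finset ℝ :=
      (({((⌊av t⌋ : ℤ) : ℝ)} ∪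
        (Finset.univ.filter (fun s : Fin m => s < t)).image
          (fun s => ((⌊av t - ((ℓp s : ℚ) : ℝ)⌋ : ℤ) : ℝ) + ((ℓp s : ℚ) : ℝ))) ∪
        Finset.univ.image (fun i : Fin (n+m+2) => nw i - νc i t)) ∪
      (Finset.univ ×ˢ (Finset.univ.filter (fun s : Fin m => s < t))).image
          (fun p : Fin (n+m+2) × Fin m => νc p.1 p.2 + ((ℓp p.2 : ℚ) : ℝ) - νc p.1 t) with hE
    obtain ⟨q, hq1, hq2, hqE⟩ := exists_rat_btwn_not_mem E hint
    have hq1' : av t - 1/2 < (q:ℝ) := by linarith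
    refine ⟨q, hq1, hq2, ?_, ?_, ?_, ?_⟩
    · intro z hz
      apply hqE
      have hzq : ((z:ℤ):ℝ) = (q:ℝ) := by exact_mod_cast congrArg (fun r : ℚ => (r:ℝ)) hz.symm
      have hzfloor : z = ⌊av t⌋ := by
        have hle : z ≤ ⌊av t⌋ := Int.le_floor.2 (by rw [hzq]; exact hq2.le)
        have hge : ⌊av t⌋ < z + 1 := Int.floor_lt.2 (by push_cast; linarith)
        omega
      have hqq : (q:ℝ) = ((⌊av t⌋ : ℤ) : ℝ) := by rw [← hzfloor, hzq]
      rw [hE, hqq]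
      exact Finset.mem_union_left _ (Finset.mem_union_left _
        (Finset.mem_union_left _ (Finset.mem_singleton_self _)))
    · intro s hst z hz
      apply hqE
      have hc2 : (q:ℝ) = ((z:ℤ):ℝ) + ((ℓp s:ℚ):ℝ) := by
        have : ((q - ℓp s : ℚ) : ℝ) = ((z:ℤ):ℝ) := by exact_mod_cast congrArg (fun r : ℚ => (r:ℝ)) hz
        push_cast at this ⊢
        linarith
      have h1 : ((z:ℤ):ℝ) < av t - ((ℓp s:ℚ):ℝ) := by linarith
      have h2 : av t - ((ℓp s:ℚ):ℝ) < ((z:ℤ):ℝ) + 1 := by linarith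
      have hzfloor : z = ⌊av t - ((ℓp s:ℚ):ℝ)⌋ := by
        have hle : z ≤ ⌊av t - ((ℓp s:ℚ):ℝ)⌋ := Int.le_floor.2 h1.le
        have hge : ⌊av t - ((ℓp s:ℚ):ℝ)⌋ < z + 1 := Int.floor_lt.2 (by push_cast; linarith)
        omega
      rw [hE]
      refine Finset.mem_union_left _ (Finset.mem_union_left _ (Finset.mem_union_right _ ?_))
      refine Finset.mem_image.2 ⟨s, Finset.mem_filter.2 ⟨Finset.mem_univ _, hst⟩, ?_⟩
      rw [← hzfloor, ← hc2]
    · intro i hi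
      apply hqE
      rw [hE]
      refine Finset.mem_union_left _ (Finset.mem_union_right _ ?_)
      refine Finset.mem_image.2 ⟨i, Finset.mem_univ _, ?_⟩
      linarith
    · intro i s hst hi
      apply hqE
      rw [hE]
      refine Finset.mem_union_right _ ?_
      refine Finset.mem_image.2 ⟨(i, s), ?_, ?_⟩
      · exact Finset.mem_product.2 ⟨Finset.mem_univ _, Finset.mem_filter.2 ⟨Finset.mem_univ _, hst⟩⟩
      · simp only
        linarith
  obtain ⟨ℓ, hℓ⟩ := seq_choice P hPmono hPex
  -- the element u
  choose v hv0 hvν using fun t : Fin m => hQsub (ℓ t)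
  set μ : Fin m → K := fun j => affForm K B (I j) lam with hμ
  set u : Fin m → K := fun j => μ j + v j with hu
  have hμ0 : ∀ j, μ j ≠ 0 := fun j => hlam (I j)
  have hμν : ∀ j, nuVal K (μ j) = av j := fun j => rfl
  have hvltμ : ∀ j, ‖μ j‖ < ‖v j‖ := by
    intro j
    rw [← nuVal_lt_iff (hv0 j) (hμ0 j), hvν j]
    exact (hℓ j).2.1
  have hunorm : ∀ j, ‖u j‖ = ‖v j‖ := by
    intro j
    have : u j = v j + μ j := by rw [hu]; ring
    rw [this]
    exact norm_add_eq_left (hvltμ j)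
  have hu0 : ∀ j, u j ≠ 0 := by
    intro j
    rw [← norm_pos_iff, hunorm j, norm_pos_iff]
    exact hv0 j
  have huν : ∀ j, nuVal K (u j) = ((ℓ j : ℚ) : ℝ) := by
    intro j
    rw [← hvν j]
    simp [nuVal, hunorm j]
  -- the key estimate
  have hest : ∀ i, nw i - δ < nuVal K (affForm K B i (T u)) ∧
      nuVal K (affForm K B i (T u)) ≤ nw i := by
    obtain ⟨x0, hx0⟩ := hTbij.2 lam
    have hx0μ : x0 = μ := by
      funext j
      have h1 : affForm K B (I j) (T x0) = x0 j := hTeval x0 j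
      rw [hx0] at h1
      exact h1.symm
    have hlamT : lam = T μ := by rw [← hx0μ, hx0]
    intro i
    have hwid : affForm K B i lam = (∑ j, ((coefC B I i j : ℚ) : K) * μ j) +
        ((((B i (Fin.last m) : ℚ) -
          ∑ j, coefC B I i j * (B (I j) (Fin.last m) : ℚ)) : ℚ) : K) := by
      conv_lhs => rw [hlamT]
      rw [hTaff i μ]
    have haffu : affForm K B i (T u) =
        affForm K B i lam + ∑ j, ((coefC B I i j:ℚ):K) * v j := by
      rw [hTaff i u, hwid]
      have hterm : ∀ j : Fin m, ((coefC B I i j:ℚ):K) * u j =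
          ((coefC B I i j:ℚ):K) * μ j + ((coefC B I i j:ℚ):K) * v j := by
        intro j
        have : u j = μ j + v j := by rw [hu]
        rw [this]; ring
      rw [Finset.sum_congr rfl (fun j _ => hterm j), Finset.sum_add_distrib]
      ring
    set Sf : Finset (Fin m) := Finset.univ.filter (fun t => coefC B I i t ≠ 0) with hSf
    have hfilter : ∑ j, ((coefC B I i j:ℚ):K) * v j = ∑ j ∈ Sf, ((coefC B I i j:ℚ):K) * v j := by
      symm
      apply Finset.sum_filter_of_ne
      intro x _ hx hc0
      apply hx
      rw [hc0]
      simp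
    have hdecomp : affForm K B i (T u) =
        affForm K B i lam + ∑ j ∈ Sf, ((coefC B I i j:ℚ):K) * v j := by
      rw [haffu, hfilter]
    have hterm0 : ∀ t ∈ Sf, ((coefC B I i t:ℚ):K) * v t ≠ 0 := by
      intro t ht
      exact mul_ne_zero (Rat.cast_ne_zero.2 (Finset.mem_filter.1 ht).2) (hv0 t)
    have htermν : ∀ t ∈ Sf, nuVal K (((coefC B I i t:ℚ):K) * v t) = νc i t + ((ℓ t:ℚ):ℝ) := by
      intro t ht
      rw [nuVal_mul' (Rat.cast_ne_zero.2 (Finset.mem_filter.1 ht).2) (hv0 t), hvν t]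
    have hw0 : affForm K B i lam ≠ 0 := hlam i
    have hK1 : ∀ t ∈ Sf, nw i - δ < νc i t + ((ℓ t:ℚ):ℝ) := by
      intro t ht
      have h1 := hNC i t (Finset.mem_filter.1 ht).2
      have h2 := (hℓ t).1
      have h3 : νc i t = nuVal K ((coefC B I i t : K)) := rfl
      have h4 : av t = nw (I t) := rfl
      linarith
    by_cases hall : ∀ t ∈ Sf, ‖((coefC B I i t:ℚ):K) * v t‖ < ‖affForm K B i lam‖
    · have hnorm : ‖affForm K B i (T u)‖ = ‖affForm K B i lam‖ := by
        rw [hdecomp]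
        exact norm_add_eq_left (norm_sum_lt_of_lt Sf _ (norm_pos_iff.2 hw0) hall)
      have hν : nuVal K (affForm K B i (T u)) = nw i := by
        simp [nuVal, hnorm, hnw]
      exact ⟨by rw [hν]; linarith, le_of_eq hν⟩
    · push_neg at hall
      obtain ⟨t₁, ht₁S, ht₁⟩ := hall
      have hνt₁ : νc i t₁ + ((ℓ t₁:ℚ):ℝ) ≤ nw i := by
        by_contra hcon
        push_neg at hcon
        have hcon' : nuVal K (affForm K B i lam) <
            nuVal K (((coefC B I i t₁:ℚ):K) * v t₁) := by
          rw [htermν t₁ ht₁S]; exact hcon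
        rw [nuVal_lt_iff hw0 (hterm0 t₁ ht₁S)] at hcon'
        exact absurd ht₁ (not_le.2 hcon')
      obtain ⟨t₀, ht₀S, ht₀min⟩ :=
        Finset.exists_min_image Sf (fun t => νc i t + ((ℓ t:ℚ):ℝ)) ⟨t₁, ht₁S⟩
      have hne0 : νc i t₀ + ((ℓ t₀:ℚ):ℝ) ≠ nw i := (hℓ t₀).2.2.2.2.1 i
      have hlt : νc i t₀ + ((ℓ t₀:ℚ):ℝ) < nw i :=
        lt_of_le_of_ne (le_trans (ht₀min t₁ ht₁S) hνt₁) hne0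
      have hdist : ∀ t ∈ Sf, t ≠ t₀ →
          νc i t₀ + ((ℓ t₀:ℚ):ℝ) < νc i t + ((ℓ t:ℚ):ℝ) := by
        intro t ht hne
        refine lt_of_le_of_ne (ht₀min t ht) ?_
        rcases lt_or_gt_of_ne hne with h | h
        · exact fun he => (hℓ t₀).2.2.2.2.2 i t h he
        · exact fun he => (hℓ t).2.2.2.2.2 i t₀ h he.symm
      have hwlt : ‖affForm K B i lam‖ < ‖((coefC B I i t₀:ℚ):K) * v t₀‖ := by
        have h1 : nuVal K (((coefC B I i t₀:ℚ):K) * v t₀) <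
            nuVal K (affForm K B i lam) := by
          rw [htermν t₀ ht₀S]; exact hlt
        exact (nuVal_lt_iff (hterm0 t₀ ht₀S) hw0).1 h1
      have hothers : ∀ t ∈ Sf.erase t₀,
          ‖((coefC B I i t:ℚ):K) * v t‖ < ‖((coefC B I i t₀:ℚ):K) * v t₀‖ := by
        intro t ht
        have htS := Finset.mem_of_mem_erase ht
        have h1 : nuVal K (((coefC B I i t₀:ℚ):K) * v t₀) <
            nuVal K (((coefC B I i t:ℚ):K) * v t) := by
          rw [htermν t htS, htermν t₀ ht₀S]
          exact hdist t htS (Finset.ne_of_mem_erase ht)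
        exact (nuVal_lt_iff (hterm0 t₀ ht₀S) (hterm0 t htS)).1 h1
      have hsplit : affForm K B i (T u) = ((coefC B I i t₀:ℚ):K) * v t₀ +
          (affForm K B i lam + ∑ j ∈ Sf.erase t₀, ((coefC B I i j:ℚ):K) * v j) := by
        rw [hdecomp, ← Finset.add_sum_erase _ _ ht₀S]
        ring
      have hrest : ‖affForm K B i lam + ∑ j ∈ Sf.erase t₀, ((coefC B I i j:ℚ):K) * v j‖ <
          ‖((coefC B I i t₀:ℚ):K) * v t₀‖ := by
        refine lt_of_le_of_lt (IsUltrametricDist.norm_add_le_max _ _) (max_lt hwlt ?_)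
        exact norm_sum_lt_of_lt _ _ (norm_pos_iff.2 (hterm0 t₀ ht₀S)) hothers
      have hnorm : ‖affForm K B i (T u)‖ = ‖((coefC B I i t₀:ℚ):K) * v t₀‖ := by
        rw [hsplit]; exact norm_add_eq_left hrest
      have hν : nuVal K (affForm K B i (T u)) = νc i t₀ + ((ℓ t₀:ℚ):ℝ) := by
        rw [← htermν t₀ ht₀S]
        simp [nuVal, hnorm]
      exact ⟨by rw [hν]; exact hK1 t₀ ht₀S, by rw [hν]; exact hlt.le⟩
  -- conclusion
  refine ⟨I, ⟨hSM, hdet⟩, T, hTbij, hTeval, ℓ, ?_, ?_, u, hu0, huν, ?_⟩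
  · exact fun t => (hℓ t).2.2.1
  · intro s t hst z
    rcases lt_or_gt_of_ne hst with h | h
    · intro he
      apply (hℓ t).2.2.2.1 s h (-z)
      push_cast
      linarith [he]
    · exact (hℓ s).2.2.2.1 t h z
  · have hBC : ∀ jj : Fin (m+1), ∑ i, |(B i jj : ℝ)| ≤ C := by
      intro jj
      rw [hC]
      have h1 : ∀ i : Fin (n+m+2), |(B i jj:ℝ)| ≤ ∑ j', |(B i j':ℝ)| := fun i =>
        Finset.single_le_sum (f := fun j' : Fin (m+1) => |(B i j':ℝ)|)
          (fun j' _ => abs_nonneg _) (Finset.mem_univ jj)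
      have h2 : ∑ i, |(B i jj:ℝ)| ≤ ∑ i, ∑ j', |(B i j':ℝ)| :=
        Finset.sum_le_sum fun i _ => h1 i
      linarith
    have hFd : ∀ jj : Fin (m+1), |Fmap K B (T u) jj - Fmap K B lam jj| ≤ C * δ := by
      intro jj
      have h1 : Fmap K B (T u) jj - Fmap K B lam jj =
          ∑ i, (B i jj : ℝ) * (nuVal K (affForm K B i (T u)) - nw i) := by
        rw [Fmap, Fmap, ← Finset.sum_sub_distrib]
        refine Finset.sum_congr rfl fun i _ => ?_
        have h0 : nw i = nuVal K (affForm K B i lam) := rfl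
        rw [h0]
        ring
      rw [h1]
      calc |∑ i, (B i jj : ℝ) * (nuVal K (affForm K B i (T u)) - nw i)|
          ≤ ∑ i, |(B i jj : ℝ) * (nuVal K (affForm K B i (T u)) - nw i)| :=
            Finset.abs_sum_le_sum_abs _ _
        _ ≤ ∑ i, |(B i jj : ℝ)| * δ := by
            refine Finset.sum_le_sum fun i _ => ?_
            rw [abs_mul]
            refine mul_le_mul_of_nonneg_left ?_ (abs_nonneg _)
            rw [abs_le]
            obtain ⟨ha, hb⟩ := hest i
            constructor <;> linarith
        _ = (∑ i, |(B i jj : ℝ)|) * δ := by rw [Finset.sum_mul]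
        _ ≤ C * δ := mul_le_mul_of_nonneg_right (hBC jj) hδ0.le
    have hsq : ∑ jj : Fin (m+1), (Fmap K B (T u) jj - Fmap K B lam jj)^2 ≤ (D*δ)^2 := by
      have h1 : ∀ jj : Fin (m+1), (Fmap K B (T u) jj - Fmap K B lam jj)^2 ≤ (C*δ)^2 := by
        intro jj
        have h2 := abs_le.1 (hFd jj)
        nlinarith [h2.1, h2.2]
      have hm : (1:ℝ) ≤ (m:ℝ)+1 := le_add_of_nonneg_left (Nat.cast_nonneg m)
      calc ∑ jj : Fin (m+1), (Fmap K B (T u) jj - Fmap K B lam jj)^2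
          ≤ ∑ _jj : Fin (m+1), (C*δ)^2 := Finset.sum_le_sum fun jj _ => h1 jj
        _ = ((m:ℝ)+1) * (C*δ)^2 := by
            rw [Finset.sum_const, Finset.card_univ, Fintype.card_fin]
            push_cast
            ring
        _ ≤ (D*δ)^2 := by
            rw [hD]
            nlinarith [mul_nonneg (mul_nonneg (sub_nonneg.2 hm)
              (by positivity : (0:ℝ) ≤ (m:ℝ)+1)) (sq_nonneg (C*δ))]
    calc Real.sqrt (∑ jj : Fin (m+1), (Fmap K B (T u) jj - Fmap K B lam jj)^2)
        ≤ Real.sqrt ((D*δ)^2) := Real.sqrt_le_sqrt hsq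
      _ = D*δ := Real.sqrt_sq (by positivity)
      _ ≤ ε/2 := hδD
      _ < ε := by linarith
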